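/- Let a ∈ ℝ, let f : ℝ → ℝ be continuous, and let m ≥ 1 be a natural number. Define the operator T by (T g)(x) = ∫_a^x g(ξ) · ξ dξ. Then the m-fold iterate of T applied to f satisfies, for every x ∈ ℝ: (T^m f)(x) = ∫_a^x ( (x² − ξ²)^{m−1} / (2^{m−1} · (m−1)!) ) · f(ξ) · ξ dξ. -/

import Mathlib

open intervalIntegral MeasureTheory Finset

lemma ftc (a : ℝ) (h : ℝ → ℝ) (hc : Continuous h) (x : ℝ) :
    HasDerivAt (fun u => ∫ t in a..u, h t) (h x) x :=
  integral_hasDerivAt_right (hc.intervalIntegrable a x)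
    (hc.stronglyMeasurableAtFilter _ _) hc.continuousAt

lemma binexp (n : ℕ) (x ξ c : ℝ) : (x^2-ξ^2)^n * c
    = ∑ j ∈ range (n+1), (n.choose j:ℝ) * x^(2*j) * ((-1:ℝ)^(n-j) * ξ^(2*(n-j)) * c) := by
  rw [show x^2 - ξ^2 = x^2 + (-(ξ^2)) by ring, add_pow, Finset.sum_mul]
  refine Finset.sum_congr rfl fun j hj => ?_
  rw [neg_pow]; ring

lemma expand (a : ℝ) (g : ℝ → ℝ) (hg : Continuous g) (n : ℕ) (x : ℝ) :
    (∫ ξ in a..x, (x^2 - ξ^2)^n * g ξ) =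
      ∑ j ∈ range (n+1), (n.choose j : ℝ) * x^(2*j) *
        ∫ ξ in a..x, (-1:ℝ)^(n-j) * ξ^(2*(n-j)) * g ξ := by
  simp only [binexp]
  rw [intervalIntegral.integral_finset_sum]
  · exact Finset.sum_congr rfl fun j hj => by
      rw [intervalIntegral.integral_const_mul]
  · intro j hj
    exact (Continuous.intervalIntegrable (by continuity) a x)

lemma derivP (a : ℝ) (g : ℝ → ℝ) (hg : Continuous g) (n : ℕ) (x : ℝ) :
    HasDerivAt (fun u => ∫ ξ in a..u, (u^2-ξ^2)^(n+1) * g ξ)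
      (2*(n+1)*x * ∫ ξ in a..x, (x^2-ξ^2)^n * g ξ) x := by
  have heq : (fun u => ∫ ξ in a..u, (u^2-ξ^2)^(n+1) * g ξ)
      = fun u => ∑ j ∈ range (n+2), ((n+1).choose j : ℝ) * u^(2*j) *
          ∫ ξ in a..u, (-1:ℝ)^(n+1-j) * ξ^(2*(n+1-j)) * g ξ :=
    funext fun u => expand a g hg (n+1) u
  rw [heq]
  set A : ℕ → ℝ → ℝ := fun k u => ∫ ξ in a..u, (-1:ℝ)^k * ξ^(2*k) * g ξ with hA
  have hAc : ∀ k, Continuous (fun ξ : ℝ => (-1:ℝ)^k * ξ^(2*k) * g ξ) := fun k => by continuity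
  have hsum : HasDerivAt
      (fun u => ∑ j ∈ range (n+2), ((n+1).choose j : ℝ) * u^(2*j) * A (n+1-j) u)
      (∑ j ∈ range (n+2),
        ((((n+1).choose j : ℝ) * (↑(2*j) * x^(2*j-1))) * A (n+1-j) x
          + (((n+1).choose j : ℝ) * x^(2*j)) * ((-1:ℝ)^(n+1-j) * x^(2*(n+1-j)) * g x))) x := by
    apply HasDerivAt.fun_sum
    intro j hj
    exact ((hasDerivAt_pow (2*j) x).const_mul (((n+1).choose j : ℝ))).mul
      (ftc a _ (hAc (n+1-j)) x)
  convert hsum using 1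
  rw [Finset.sum_add_distrib]
  have h2 : ∑ j ∈ range (n+2),
      (((n+1).choose j : ℝ) * x^(2*j)) * ((-1:ℝ)^(n+1-j) * x^(2*(n+1-j)) * g x) = 0 := by
    rw [← binexp, sub_self, zero_pow (Nat.succ_ne_zero n), zero_mul]
  rw [h2, add_zero, expand a g hg n x, Finset.mul_sum]
  conv_rhs => rw [Finset.sum_range_succ']
  simp only [Nat.mul_zero, Nat.cast_zero, zero_mul, mul_zero, zero_add, add_zero]
  refine Finset.sum_congr rfl fun j hj => ?_
  rw [show 2*(j+1)-1 = 2*j+1 from by omega, show n+1-(j+1) = n-j from by omega]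
  have hc : (((n+1).choose (j+1) : ℕ) : ℝ) * (j+1) = (n+1) * (n.choose j : ℝ) := by
    exact_mod_cast congrArg Nat.cast (Nat.add_one_mul_choose_eq n j).symm
  have hAx : (∫ ξ in a..x, (-1:ℝ)^(n-j) * ξ^(2*(n-j)) * g ξ) = A (n-j) x := rfl
  rw [hAx]
  push_cast
  push_cast at hc
  linear_combination (2 * x^(2*j+1) * A (n-j) x) * hc.symm

lemma contP (a : ℝ) (g : ℝ → ℝ) (hg : Continuous g) (n : ℕ) :
    Continuous (fun x => ∫ ξ in a..x, (x^2-ξ^2)^n * g ξ) := by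
  have heq : (fun x => ∫ ξ in a..x, (x^2-ξ^2)^n * g ξ)
      = fun x => ∑ j ∈ range (n+1), (n.choose j : ℝ) * x^(2*j) *
          ∫ ξ in a..x, (-1:ℝ)^(n-j) * ξ^(2*(n-j)) * g ξ := funext fun x => expand a g hg n x
  rw [heq]
  refine continuous_finset_sum _ fun j _ => ?_
  refine (continuous_const.mul (continuous_pow _)).mul
    (continuous_iff_continuousAt.2 fun x => (ftc a _ (by continuity) x).continuousAt)

lemma stepP (a : ℝ) (g : ℝ → ℝ) (hg : Continuous g) (n : ℕ) (x : ℝ) :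
    (2*(n+1:ℝ)) * ∫ ξ in a..x, (∫ η in a..ξ, (ξ^2-η^2)^n * g η) * ξ
      = ∫ ξ in a..x, (x^2-ξ^2)^(n+1) * g ξ := by
  set H : ℝ → ℝ := fun u => (∫ ξ in a..u, (u^2-ξ^2)^(n+1) * g ξ)
      - (2*(n+1:ℝ)) * ∫ ξ in a..u, (∫ η in a..ξ, (ξ^2-η^2)^n * g η) * ξ with hH
  have hd : ∀ u, HasDerivAt H 0 u := by
    intro u
    have h1 := derivP a g hg n u
    have h2 := ((ftc a (fun ξ => (∫ η in a..ξ, (ξ^2-η^2)^n * g η) * ξ)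
      ((contP a g hg n).mul continuous_id) u).const_mul (2*(n+1:ℝ)))
    have := h1.sub h2
    convert this using 1
    · rfl
    · rfl
    · rfl
    · ring
  have hconst : ∀ u, H u = H a :=
    fun u => is_const_of_deriv_eq_zero (fun v => (hd v).differentiableAt)
      (fun v => (hd v).deriv) u a
  have hzero : H a = 0 := by
    simp [hH, intervalIntegral.integral_same]
  have h3 := hconst x
  rw [hzero] at h3
  simp only [hH] at h3
  linarith

lemma iter (a : ℝ) (f : ℝ → ℝ) (hf : Continuous f)
    (T : (ℝ → ℝ) → (ℝ → ℝ))
    (hT : ∀ g : ℝ → ℝ, ∀ x : ℝ, T g x = ∫ ξ in a..x, g ξ * ξ) :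
    ∀ (k : ℕ) (x : ℝ), (T^[k+1] f) x
      = (1 / (2^k * (k.factorial:ℝ))) * ∫ ξ in a..x, (x^2-ξ^2)^k * (f ξ * ξ) := by
  have hg : Continuous (fun ξ : ℝ => f ξ * ξ) := hf.mul continuous_id
  intro k
  induction k with
  | zero =>
    intro x
    simp only [zero_add, Function.iterate_one, pow_zero, Nat.factorial_zero,
      Nat.cast_one, mul_one, one_mul, hT f x]
    norm_num
  | succ k ih =>
    intro x
    have h1 : T^[k+1+1] f x = T (T^[k+1] f) x := by
      rw [Function.iterate_succ_apply']
    rw [h1, hT]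
    have h2 : (∫ ξ in a..x, T^[k+1] f ξ * ξ)
        = (1 / (2^k * (k.factorial:ℝ))) *
          ∫ ξ in a..x, (∫ η in a..ξ, (ξ^2-η^2)^k * (f η * η)) * ξ := by
      rw [← intervalIntegral.integral_const_mul]
      apply intervalIntegral.integral_congr
      intro ξ _
      simp only [ih]
      ring
    rw [h2, ← stepP a _ hg k x]
    have hfac : ((k+1).factorial : ℝ) = (k+1) * (k.factorial : ℝ) := by
      push_cast [Nat.factorial_succ]; ring
    rw [hfac]
    have h2k : (2:ℝ)^k ≠ 0 := by positivity
    have hfk : (k.factorial:ℝ) ≠ 0 := by positivity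
    have hk1 : ((k:ℝ)+1) ≠ 0 := by positivity
    field_simp
    ring

theorem statement_19 (a : ℝ) (f : ℝ → ℝ) (hf : Continuous f)
    (m : ℕ) (hm : 1 ≤ m)
    (T : (ℝ → ℝ) → (ℝ → ℝ))
    (hT : ∀ g : ℝ → ℝ, ∀ x : ℝ, T g x = ∫ ξ in a..x, g ξ * ξ) (x : ℝ) :
    (T^[m] f) x =
      ∫ ξ in a..x,
        ((x ^ 2 - ξ ^ 2) ^ (m - 1) / (2 ^ (m - 1) * ((m - 1).factorial : ℝ))) * f ξ * ξ := by
  obtain ⟨k, rfl⟩ : ∃ k, m = k + 1 := ⟨m - 1, by omega⟩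
  have h := iter a f hf T hT k x
  rw [h, ← intervalIntegral.integral_const_mul]
  apply intervalIntegral.integral_congr
  intro ξ _
  simp only [Nat.add_sub_cancel]
  ring
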